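/- If X', X'' are subobjects of X of maximal slope (i.e., nonzero with μ(X'') ≤ μ(X') for all nonzero subobjects), then X'+X'' is of maximal slope, and X' ∩ X'' is of maximal slope if nonzero. Consequently, if X admits any subobject of maximal slope, it admits a unique final (largest) such subobject. -/

import Mathlib

open CategoryTheory Limits

universe v u v' u'

variable (C : Type u) [Category.{v} C] [Preadditive C] [HasZeroObject C]
  [HasBinaryBiproducts C]
variable (D : Type u') [Category.{v'} D] [Abelian D]
variable (F : C ⥤ D) [F.Additive] [F.Faithful]
variable (V : Type*) [AddCommGroup V] [LinearOrder V] [IsOrderedAddMonoid V]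

/-- The data and axioms of abstract Harder–Narasimhan theory:
an exact structure on `C` (given by its class of short strict exact sequences),
an exact faithful functor `F : C ⥤ D` inducing bijections between strict
subobjects and subobjects of the image, a rank function on `D` and a degree
function on `C`. -/
structure HNTheory where
  /-- `SSE f g` means `0 ⟶ A ⟶ B ⟶ Z ⟶ 0` is a short strict exact sequence. -/
  SSE : ∀ ⦃A B Z : C⦄, (A ⟶ B) → (B ⟶ Z) → Prop
  sse_comp_zero : ∀ ⦃A B Z : C⦄ (f : A ⟶ B) (g : B ⟶ Z), SSE f g → f ≫ g = 0
  sse_mono : ∀ ⦃A B Z : C⦄ (f : A ⟶ B) (g : B ⟶ Z), SSE f g → Mono f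
  sse_epi : ∀ ⦃A B Z : C⦄ (f : A ⟶ B) (g : B ⟶ Z), SSE f g → Epi g
  sse_isKernel : ∀ ⦃A B Z : C⦄ (f : A ⟶ B) (g : B ⟶ Z) (hfg : SSE f g),
    Nonempty (IsLimit (KernelFork.ofι f (sse_comp_zero f g hfg)))
  sse_isCokernel : ∀ ⦃A B Z : C⦄ (f : A ⟶ B) (g : B ⟶ Z) (hfg : SSE f g),
    Nonempty (IsColimit (CokernelCofork.ofπ g (sse_comp_zero f g hfg)))
  /-- `F` is exact. -/
  F_exact : ∀ ⦃A B Z : C⦄ (f : A ⟶ B) (g : B ⟶ Z) (hfg : SSE f g),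
    (ShortComplex.mk (F.map f) (F.map g)
      (by rw [← F.map_comp, sse_comp_zero f g hfg, F.map_zero])).ShortExact
  /-- `F` induces a bijection between strict subobjects of `X` and subobjects
  of `F(X)`. -/
  strict_sub_bij : ∀ X : C,
    Function.Bijective
      (fun S : {S : Subobject X // ∃ (Z : C) (g : X ⟶ Z), SSE S.arrow g} =>
        imageSubobject (F.map S.1.arrow))
  rk : D → ℕ
  rk_iso : ∀ ⦃X Y : D⦄, (X ≅ Y) → rk X = rk Y
  rk_eq_zero_iff : ∀ X : D, rk X = 0 ↔ IsZero X
  rk_additive : ∀ (S : ShortComplex D), S.ShortExact → rk S.X₂ = rk S.X₁ + rk S.X₃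
  deg : C → V
  deg_iso : ∀ ⦃X Y : C⦄, (X ≅ Y) → deg X = deg Y
  deg_additive : ∀ ⦃A B Z : C⦄ (f : A ⟶ B) (g : B ⟶ Z), SSE f g → deg B = deg A + deg Z
  deg_le_of_FIso : ∀ ⦃X Y : C⦄ (f : X ⟶ Y), IsIso (F.map f) → deg X ≤ deg Y
  deg_eq_iff_of_FIso : ∀ ⦃X Y : C⦄ (f : X ⟶ Y), IsIso (F.map f) → (deg X = deg Y ↔ IsIso f)

namespace HNTheory

variable {C D F V}

/-- The subobject `F(X') ⊆ F(X)` associated to a subobject `X' ⊆ X`. -/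
noncomputable def FSub (_h : HNTheory C D F V) {X : C} (S : Subobject X) :
    Subobject (F.obj X) :=
  imageSubobject (F.map S.arrow)

variable (h : HNTheory C D F V)

/-- The rank of an object of `C` is the rank of its image in `D`. -/
def rkC (X : C) : ℕ := h.rk (F.obj X)

/-- A subobject is strict if it is an admissible (strict) monomorphism,
i.e. fits in a short strict exact sequence. -/
def StrictSub {X : C} (S : Subobject X) : Prop :=
  ∃ (Z : C) (g : X ⟶ Z), h.SSE S.arrow g

/-- `μ(X) ≤ μ(Y)`, in cross-multiplied form `rk(Y) • deg(X) ≤ rk(X) • deg(Y)`. -/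
def muLE (X Y : C) : Prop := h.rkC Y • h.deg X ≤ h.rkC X • h.deg Y

/-- `μ(X) < μ(Y)`, in cross-multiplied form. -/
def muLT (X Y : C) : Prop := h.rkC Y • h.deg X < h.rkC X • h.deg Y

/-- `μ(X) = μ(Y)`, in cross-multiplied form. -/
def muEQ (X Y : C) : Prop := h.rkC Y • h.deg X = h.rkC X • h.deg Y

/-- A nonzero object is semistable if every nonzero proper subobject has
slope at most that of the ambient object. -/
def Semistable (X : C) : Prop :=
  ¬ IsZero X ∧ ∀ S : Subobject X, ¬ IsZero ((S : C)) → S ≠ ⊤ → h.muLE (S : C) X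

/-- A subobject of maximal slope. -/
def MaxSlopeSub {X : C} (S : Subobject X) : Prop :=
  ¬ IsZero ((S : C)) ∧ ∀ T : Subobject X, ¬ IsZero ((T : C)) → h.muLE (T : C) (S : C)

/-- `G` is (a model of) the `i`-th graded piece `c i.succ / c i.castSucc` of a
filtration `c` by strict subobjects. -/
def GrAt {X : C} {N : ℕ} (c : Fin (N + 1) → Subobject X) (i : Fin N) (G : C) : Prop :=
  ∃ (hle : c i.castSucc ≤ c i.succ) (p : ((c i.succ : Subobject X) : C) ⟶ G),
    h.SSE (Subobject.ofLE (c i.castSucc) (c i.succ) hle) p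

/-- `c` is a Harder–Narasimhan filtration. -/
def IsHNFilt {X : C} {N : ℕ} (c : Fin (N + 1) → Subobject X) : Prop :=
  StrictMono c ∧ c 0 = ⊥ ∧ c (Fin.last N) = ⊤ ∧ (∀ i, h.StrictSub (c i)) ∧
  (∀ (i : Fin N) (G : C), h.GrAt c i G → h.Semistable G) ∧
  (∀ (i j : Fin N), i < j → ∀ (Gi Gj : C),
    h.GrAt c i Gi → h.GrAt c j Gj → h.muLT Gj Gi)

end HNTheory

namespace HNTheory

set_option linter.unusedSectionVars false

variable {C D F V}

section Dside

variable {E : Type u'} [Category.{v'} E] [Abelian E]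

private lemma epi_of_image_eq' {A B B' : E} (u : A ⟶ B) (m : B ⟶ B') [Mono m]
    (him : imageSubobject (u ≫ m) = imageSubobject m) : Epi u := by
  have h1 : factorThruImageSubobject (u ≫ m) ≫ (imageSubobject (u ≫ m)).arrow = u ≫ m :=
    imageSubobject_arrow_comp (u ≫ m)
  have h2 : Subobject.ofLE _ _ him.le ≫ (imageSubobject m).arrow
      = (imageSubobject (u ≫ m)).arrow := Subobject.ofLE_arrow him.le
  haveI : Mono (factorThruImageSubobject m) :=
    mono_of_mono_fac (imageSubobject_arrow_comp m)
  haveI : IsIso (factorThruImageSubobject m) := isIso_of_mono_of_epi _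
  haveI : IsIso (Subobject.ofLE _ _ him.le) := by
    refine ⟨Subobject.ofLE _ _ him.ge, ?_, ?_⟩ <;>
      · apply (cancel_mono (Subobject.arrow _)).1
        simp [Subobject.ofLE_arrow]
  have h3 : inv (factorThruImageSubobject m) ≫ m = (imageSubobject m).arrow := by
    rw [IsIso.inv_comp_eq]
    exact (imageSubobject_arrow_comp m).symm
  have h4 : u ≫ m = (factorThruImageSubobject (u ≫ m) ≫ Subobject.ofLE _ _ him.le ≫
      inv (factorThruImageSubobject m)) ≫ m := by
    simp only [Category.assoc, h3, h2, h1]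
  have h5 := (cancel_mono m).1 h4
  rw [h5]
  infer_instance

private lemma comp_eq_zero_of_image_le_kernel' {A B B' : E} (f : A ⟶ B) (g : B ⟶ B')
    (hle : imageSubobject f ≤ kernelSubobject g) : f ≫ g = 0 := by
  rw [← imageSubobject_arrow_comp f, Category.assoc, ← Subobject.ofLE_arrow hle,
    Category.assoc, kernelSubobject_arrow_comp, comp_zero, comp_zero]

private lemma image_le_kernel_of_comp_eq_zero' {A B B' : E} (f : A ⟶ B) (g : B ⟶ B')
    (w : f ≫ g = 0) : imageSubobject f ≤ kernelSubobject g :=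
  imageSubobject_le f (factorThruKernelSubobject g f w)
    (factorThruKernelSubobject_comp_arrow _ _ _)

private lemma shortExact_of_mono' {A B : E} (m : A ⟶ B) [Mono m] :
    (ShortComplex.mk m (cokernel.π m) (cokernel.condition m)).ShortExact :=
  ⟨ShortComplex.exact_of_g_is_cokernel _ (cokernelIsCokernel m)⟩

end Dside

private lemma nsmul_cancel {n : ℕ} (hn : 0 < n) {a b : V} (hab : n • a ≤ n • b) : a ≤ b :=
  le_of_nsmul_le_nsmul_right hn.ne' hab

variable (h : HNTheory C D F V)
include h

lemma isZero_of_F {A : C} (hz : IsZero (F.obj A)) : IsZero A := by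
  rw [IsZero.iff_id_eq_zero] at hz ⊢
  apply F.map_injective
  rw [F.map_id, F.map_zero, hz]

lemma F_map_eq_zero {A B : C} {f : A ⟶ B} (hf : F.map f = 0) : f = 0 :=
  F.map_injective (by rw [hf, F.map_zero])

lemma rkC_pos {A : C} (hA : ¬ IsZero A) : 0 < h.rkC A :=
  Nat.pos_of_ne_zero fun e => hA (h.isZero_of_F ((h.rk_eq_zero_iff _).1 e))

lemma rk_le_of_mono {A B : D} (m : A ⟶ B) [Mono m] : h.rk A ≤ h.rk B := by
  have := h.rk_additive _ (shortExact_of_mono' m)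
  dsimp at this
  omega

lemma isIso_of_mono_of_rk_eq {A B : D} (m : A ⟶ B) [Mono m] (hrk : h.rk A = h.rk B) :
    IsIso m := by
  have hadd := h.rk_additive _ (shortExact_of_mono' m)
  have hc : h.rk (cokernel m) = 0 := by
    dsimp at hadd; omega
  have hz : IsZero (cokernel m) := (h.rk_eq_zero_iff _).1 hc
  haveI : Epi m := Abelian.epi_of_cokernel_π_eq_zero _ (hz.eq_zero_of_tgt _)
  exact isIso_of_mono_of_epi m

lemma exists_strict (Y : C) (K : Subobject (F.obj Y)) :
    ∃ A : Subobject Y, h.StrictSub A ∧ imageSubobject (F.map A.arrow) = K := by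
  obtain ⟨⟨A, hA⟩, heq⟩ := (h.strict_sub_bij Y).2 K
  exact ⟨A, hA, heq⟩

lemma mono_F_arrow {Y : C} (W : Subobject Y) : Mono (F.map W.arrow) := by
  obtain ⟨A, hA, heq⟩ := h.exists_strict ((W : C)) (kernelSubobject (F.map W.arrow))
  have hz : A.arrow ≫ W.arrow = 0 := by
    apply h.F_map_eq_zero
    rw [F.map_comp]
    exact comp_eq_zero_of_image_le_kernel' _ _ heq.le
  have hzA : IsZero ((A : C) : C) := by
    haveI : Mono (A.arrow ≫ W.arrow) := mono_comp _ _
    exact IsZero.of_mono_eq_zero _ hz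
  have hbot : kernelSubobject (F.map W.arrow) = ⊥ := by
    rw [← heq]
    have hz2 : F.map A.arrow = 0 := (F.map_isZero hzA).eq_zero_of_src _
    rw [hz2, imageSubobject_zero]
  apply Abelian.mono_of_kernel_ι_eq_zero
  have harr : (kernelSubobject (F.map W.arrow)).arrow = 0 := by
    rw [hbot, Subobject.bot_arrow]
  rw [← kernelSubobject_arrow' (F.map W.arrow), harr, comp_zero]

lemma sse_lift {Y Z P : C} {A : Subobject Y} {g : Y ⟶ Z} (hsse : h.SSE A.arrow g)
    (m : P ⟶ Y) (hm : m ≫ g = 0) : ∃ l : P ⟶ (A : C), l ≫ A.arrow = m := by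
  obtain ⟨l, hl⟩ := KernelFork.IsLimit.lift' (h.sse_isKernel _ _ hsse).some m hm
  exact ⟨l, hl⟩

lemma le_of_image_le {Y : C} {W W' : Subobject Y} (hst : h.StrictSub W')
    (hle : imageSubobject (F.map W.arrow) ≤ imageSubobject (F.map W'.arrow)) : W ≤ W' := by
  obtain ⟨Z, g, hsse⟩ := hst
  have h0 : W.arrow ≫ g = 0 := by
    apply h.F_map_eq_zero
    rw [F.map_comp]
    refine comp_eq_zero_of_image_le_kernel' _ _ (hle.trans ?_)
    exact image_le_kernel_of_comp_eq_zero' _ _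
      (by rw [← F.map_comp, h.sse_comp_zero _ _ hsse, F.map_zero])
  obtain ⟨l, hl⟩ := h.sse_lift hsse W.arrow h0
  exact Subobject.le_of_comm l hl

lemma image_le_of_le {Y : C} {W W' : Subobject Y} (hle : W ≤ W') :
    imageSubobject (F.map W.arrow) ≤ imageSubobject (F.map W'.arrow) := by
  have e : F.map W.arrow = F.map (Subobject.ofLE _ _ hle) ≫ F.map W'.arrow := by
    rw [← F.map_comp, Subobject.ofLE_arrow]
  rw [e]
  exact imageSubobject_comp_le _ _

lemma isIso_F_of_factor {P Q' Y : C} (m₁ : P ⟶ Y) (m₂ : Q' ⟶ Y) [Mono (F.map m₁)]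
    [Mono (F.map m₂)] (ψ : P ⟶ Q') (hψ : ψ ≫ m₂ = m₁)
    (him : imageSubobject (F.map m₁) = imageSubobject (F.map m₂)) : IsIso (F.map ψ) := by
  have hc : F.map ψ ≫ F.map m₂ = F.map m₁ := by rw [← F.map_comp, hψ]
  haveI : Mono (F.map ψ) := mono_of_mono_fac hc
  haveI : Epi (F.map ψ) := epi_of_image_eq' _ _ (by rw [hc]; exact him)
  exact isIso_of_mono_of_epi _

lemma not_isZero_of_le {Y : C} {W W' : Subobject Y} (hnz : ¬ IsZero ((W : C) : C))
    (hle : W ≤ W') : ¬ IsZero ((W' : C) : C) := by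
  intro hz
  haveI : Mono (Subobject.ofLE _ _ hle) := mono_of_mono_fac (Subobject.ofLE_arrow hle)
  exact hnz (IsZero.of_mono (Subobject.ofLE _ _ hle) hz)

lemma deg_isZero {A : C} (hz : IsZero A) : h.deg A = 0 := by
  obtain ⟨A₀, hA₀, -⟩ := h.exists_strict A ⊥
  obtain ⟨Z, g, hsse⟩ := hA₀
  have hz0 : IsZero ((A₀ : C) : C) :=
    IsZero.of_mono_eq_zero A₀.arrow (hz.eq_zero_of_tgt _)
  have hzZ : IsZero Z := by
    haveI := h.sse_epi _ _ hsse
    exact IsZero.of_epi g hz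
  have hadd := h.deg_additive _ _ hsse
  rw [h.deg_iso (hz0.iso hz), h.deg_iso (hzZ.iso hz)] at hadd
  exact add_left_cancel (show h.deg A + h.deg A = h.deg A + 0 by rw [add_zero, ← hadd])

lemma rkC_isZero {A : C} (hz : IsZero A) : h.rkC A = 0 :=
  (h.rk_eq_zero_iff _).2 (F.map_isZero hz)

lemma max_transfer {X : C} {S : Subobject X} (hS : h.MaxSlopeSub S) (U' : Subobject X)
    (hnz : ¬ IsZero ((U' : C) : C))
    (hge : h.rkC ((U' : C) : C) • h.deg ((S : C) : C)
      ≤ h.rkC ((S : C) : C) • h.deg ((U' : C) : C)) :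
    h.MaxSlopeSub U' := by
  refine ⟨hnz, fun W hW => ?_⟩
  have h1 : h.rkC ((S : C) : C) • h.deg ((W : C) : C)
      ≤ h.rkC ((W : C) : C) • h.deg ((S : C) : C) := hS.2 W hW
  have hpos := h.rkC_pos hS.1
  show h.rkC ((U' : C) : C) • h.deg ((W : C) : C)
      ≤ h.rkC ((W : C) : C) • h.deg ((U' : C) : C)
  apply nsmul_cancel hpos
  calc h.rkC ((S:C):C) • (h.rkC ((U':C):C) • h.deg ((W:C):C))
      = h.rkC ((U':C):C) • (h.rkC ((S:C):C) • h.deg ((W:C):C)) := smul_comm _ _ _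
    _ ≤ h.rkC ((U':C):C) • (h.rkC ((W:C):C) • h.deg ((S:C):C)) := nsmul_le_nsmul_right h1 _
    _ = h.rkC ((W:C):C) • (h.rkC ((U':C):C) • h.deg ((S:C):C)) := smul_comm _ _ _
    _ ≤ h.rkC ((W:C):C) • (h.rkC ((S:C):C) • h.deg ((U':C):C)) := nsmul_le_nsmul_right hge _
    _ = h.rkC ((S:C):C) • (h.rkC ((W:C):C) • h.deg ((U':C):C)) := smul_comm _ _ _

lemma strict_of_max {X : C} {S : Subobject X} (hS : h.MaxSlopeSub S) : h.StrictSub S := by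
  obtain ⟨S', hS', him⟩ := h.exists_strict X (imageSubobject (F.map S.arrow))
  have hle : S ≤ S' := h.le_of_image_le hS' him.ge
  haveI := h.mono_F_arrow S
  haveI := h.mono_F_arrow S'
  have hiso : IsIso (F.map (Subobject.ofLE S S' hle)) :=
    h.isIso_F_of_factor S.arrow S'.arrow _ (Subobject.ofLE_arrow hle) him.symm
  have hdeg : h.deg ((S : C) : C) ≤ h.deg ((S' : C) : C) := h.deg_le_of_FIso _ hiso
  have hrk : h.rkC ((S : C) : C) = h.rkC ((S' : C) : C) :=
    h.rk_iso (asIso (F.map (Subobject.ofLE S S' hle)))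
  have hnz' : ¬ IsZero ((S' : C) : C) := h.not_isZero_of_le hS.1 hle
  have hmu := hS.2 S' hnz'
  have hdeg' : h.deg ((S' : C) : C) ≤ h.deg ((S : C) : C) := by
    apply nsmul_cancel (h.rkC_pos hS.1)
    calc h.rkC ((S:C):C) • h.deg ((S':C):C)
        ≤ h.rkC ((S':C):C) • h.deg ((S:C):C) := hmu
      _ = h.rkC ((S:C):C) • h.deg ((S:C):C) := by rw [← hrk]
  have hdeq : h.deg ((S : C) : C) = h.deg ((S' : C) : C) := le_antisymm hdeg hdeg'
  haveI : IsIso (Subobject.ofLE S S' hle) := (h.deg_eq_iff_of_FIso _ hiso).1 hdeq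
  have heq : S = S' := le_antisymm hle (Subobject.le_of_comm (inv (Subobject.ofLE S S' hle))
    (by rw [IsIso.inv_comp_eq]; exact (Subobject.ofLE_arrow hle).symm))
  rw [heq]; exact hS'

private lemma arith1 {a b u w : ℕ} {dS dA dQ dU dW dR dT : V}
    (hdegU : dU = dA + dQ) (hdegT : dT = dW + dR)
    (hdA : dS ≤ dA) (hdR : dR ≤ dQ)
    (hW : a • dW ≤ w • dS) (hST : b • dS ≤ a • dT)
    (hsum : u + w = a + b) :
    u • dS ≤ a • dU := by
  subst hdegU hdegT
  have h2 : a • dS + a • dR ≤ a • (dA + dQ) := by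
    rw [smul_add]
    exact add_le_add (nsmul_le_nsmul_right hdA a) (nsmul_le_nsmul_right hdR a)
  have h5 : b • dS ≤ w • dS + a • dR := by
    calc b • dS ≤ a • (dW + dR) := hST
      _ = a • dW + a • dR := smul_add a _ _
      _ ≤ w • dS + a • dR := add_le_add_left hW _
  have hids : u • dS + w • dS = a • dS + b • dS := by
    rw [← add_nsmul, ← add_nsmul, hsum]
  calc u • dS = a • dS + b • dS - w • dS := eq_sub_of_add_eq hids
    _ ≤ a • dS + (w • dS + a • dR) - w • dS := sub_le_sub_right (add_le_add_right h5 _) _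
    _ = a • dS + a • dR := by abel
    _ ≤ a • (dA + dQ) := h2

private lemma arith2 {a b u w : ℕ} {dS dA dQ dU dW dR dT : V}
    (hdegU : dU = dA + dQ) (hdegT : dT = dW + dR)
    (hdA : dS ≤ dA) (hdR : dR ≤ dQ)
    (hST : b • dS ≤ a • dT) (hUS : a • dU ≤ u • dS)
    (hsum : u + w = a + b) :
    w • dS ≤ a • dW := by
  subst hdegU hdegT
  have hQ : a • dR ≤ u • dS - a • dS := by
    have h1 : a • dS + a • dR ≤ a • (dA + dQ) := by
      rw [smul_add]
      exact add_le_add (nsmul_le_nsmul_right hdA a) (nsmul_le_nsmul_right hdR a)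
    exact le_sub_iff_add_le'.2 (h1.trans hUS)
  have h6 : b • dS ≤ a • dW + a • dR := by
    calc b • dS ≤ a • (dW + dR) := hST
      _ = a • dW + a • dR := smul_add a _ _
  have hids : w • dS + u • dS = a • dS + b • dS := by
    rw [← add_nsmul, ← add_nsmul, add_comm w u, hsum]
  calc w • dS = a • dS + b • dS - u • dS := eq_sub_of_add_eq hids
    _ ≤ a • dS + (a • dW + a • dR) - u • dS := sub_le_sub_right (add_le_add_right h6 _) _
    _ ≤ a • dS + (a • dW + (u • dS - a • dS)) - u • dS :=
        sub_le_sub_right (add_le_add_right (add_le_add_right hQ _) _) _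
    _ = a • dW := by abel

open scoped Pseudoelement in
lemma core {X : C} (S T U' : Subobject X) (hS : h.MaxSlopeSub S) (hT : h.MaxSlopeSub T)
    (hSU : S ≤ U') (hTU : T ≤ U')
    (hepi : Epi (F.map (biprod.desc (Subobject.ofLE S U' hSU) (Subobject.ofLE T U' hTU)))) :
    h.rkC ((U' : C) : C) • h.deg ((S : C) : C) ≤ h.rkC ((S : C) : C) • h.deg ((U' : C) : C) ∧
    ∀ Ig : Subobject X, IsGLB {S, T} Ig →
      h.rkC ((Ig : C) : C) • h.deg ((S : C) : C)
        ≤ h.rkC ((S : C) : C) • h.deg ((Ig : C) : C) := by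
  have hsYa : Subobject.ofLE S U' hSU ≫ U'.arrow = S.arrow := Subobject.ofLE_arrow hSU
  have htYa : Subobject.ofLE T U' hTU ≫ U'.arrow = T.arrow := Subobject.ofLE_arrow hTU
  set sY := Subobject.ofLE S U' hSU
  set tY := Subobject.ofLE T U' hTU
  -- the strict closure `A` of `S` inside `U'`
  obtain ⟨A, hAstrict, hAim⟩ := h.exists_strict ((U' : C)) (imageSubobject (F.map sY))
  obtain ⟨QA, q, hsseA⟩ := hAstrict
  have hAq0 : A.arrow ≫ q = 0 := h.sse_comp_zero _ _ hsseA
  have hsq0 : sY ≫ q = 0 := by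
    apply h.F_map_eq_zero
    rw [F.map_comp]
    apply comp_eq_zero_of_image_le_kernel'
    refine le_trans (le_of_eq hAim.symm) ?_
    exact image_le_kernel_of_comp_eq_zero' _ _
      (by rw [← F.map_comp, hAq0, F.map_zero])
  obtain ⟨φ₀, hφ₀⟩ := h.sse_lift hsseA sY hsq0
  haveI : Mono (F.map S.arrow) := h.mono_F_arrow S
  haveI : Mono (F.map U'.arrow) := h.mono_F_arrow U'
  haveI : Mono (F.map A.arrow) := h.mono_F_arrow A
  haveI hmsY : Mono (F.map sY) := by
    have e : F.map sY ≫ F.map U'.arrow = F.map S.arrow := by rw [← F.map_comp, hsYa]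
    exact mono_of_mono_fac e
  have hφ₀iso : IsIso (F.map φ₀) := h.isIso_F_of_factor sY A.arrow φ₀ hφ₀ hAim.symm
  have hdegA : h.deg ((S : C) : C) ≤ h.deg ((A : C) : C) := h.deg_le_of_FIso _ hφ₀iso
  have hrkA : h.rkC ((S : C) : C) = h.rkC ((A : C) : C) := h.rk_iso (asIso (F.map φ₀))
  have hdegU : h.deg ((U' : C) : C) = h.deg ((A : C) : C) + h.deg QA := h.deg_additive _ _ hsseA
  have hrkU : h.rkC ((U' : C) : C) = h.rkC ((A : C) : C) + h.rkC QA := by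
    have e := h.rk_additive _ (h.F_exact _ _ hsseA); dsimp at e; exact e
  -- the strict "intersection" `W` inside `T`
  set g' : ((T : C) : C) ⟶ QA := tY ≫ q with hg'
  obtain ⟨W, hWstrict, hWim⟩ := h.exists_strict ((T : C)) (kernelSubobject (F.map g'))
  obtain ⟨R, r, hsseW⟩ := hWstrict
  have hWr0 : W.arrow ≫ r = 0 := h.sse_comp_zero _ _ hsseW
  have hWg0 : W.arrow ≫ g' = 0 := by
    apply h.F_map_eq_zero
    rw [F.map_comp]
    exact comp_eq_zero_of_image_le_kernel' _ _ hWim.le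
  obtain ⟨φ, hφ0⟩ := CokernelCofork.IsColimit.desc' (h.sse_isCokernel _ _ hsseW).some g' hWg0
  have hφ : r ≫ φ = g' := hφ0
  haveI hFrEpi : Epi (F.map r) := (h.F_exact _ _ hsseW).epi_g
  haveI hFqEpi : Epi (F.map q) := (h.F_exact _ _ hsseA).epi_g
  have hdq : biprod.desc sY tY ≫ q = biprod.snd ≫ g' := by
    apply biprod.hom_ext' <;> simp [hsq0, hg']
  haveI hFg'epi : Epi (F.map g') := by
    haveI h1 : Epi (F.map (biprod.desc sY tY ≫ q)) := by
      rw [F.map_comp]; exact epi_comp _ _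
    haveI h2 : Epi (F.map biprod.snd ≫ F.map g') := by
      rw [← F.map_comp, ← hdq]; exact h1
    exact epi_of_epi (F.map (biprod.snd : (S : C) ⊞ (T : C) ⟶ (T : C))) (F.map g')
  haveI hFφepi : Epi (F.map φ) := by
    haveI e : Epi (F.map r ≫ F.map φ) := by rw [← F.map_comp, hφ]; exact hFg'epi
    exact epi_of_epi (F.map r) (F.map φ)
  have hexactW : (ShortComplex.mk (F.map W.arrow) (F.map g')
      (by rw [← F.map_comp, hWg0, F.map_zero])).Exact := by
    rw [ShortComplex.exact_iff_image_eq_kernel]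
    exact hWim
  haveI hFφmono : Mono (F.map φ) := by
    apply Abelian.Pseudoelement.mono_of_zero_of_map_zero
    intro a ha
    obtain ⟨b, hb⟩ := Abelian.Pseudoelement.pseudo_surjective_of_epi (F.map r) a
    have hgb : F.map g' b = 0 := by
      have e : F.map g' = F.map r ≫ F.map φ := by rw [← F.map_comp, hφ]
      rw [e, Abelian.Pseudoelement.comp_apply, hb, ha]
    obtain ⟨c, hc⟩ := Abelian.Pseudoelement.pseudo_exact_of_exact hexactW b hgb
    have hz0 : (F.map W.arrow ≫ F.map r) c = 0 := by
      rw [← F.map_comp, hWr0, F.map_zero, Abelian.Pseudoelement.zero_apply]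
    calc a = F.map r b := hb.symm
      _ = F.map r (F.map W.arrow c) := by rw [hc]
      _ = (F.map W.arrow ≫ F.map r) c := (Abelian.Pseudoelement.comp_apply _ _ _).symm
      _ = 0 := hz0
  have hFφiso : IsIso (F.map φ) := isIso_of_mono_of_epi _
  have hdegR : h.deg R ≤ h.deg QA := h.deg_le_of_FIso _ hFφiso
  have hrkR : h.rkC R = h.rkC QA := h.rk_iso (asIso (F.map φ))
  have hdegT : h.deg ((T : C) : C) = h.deg ((W : C) : C) + h.deg R := h.deg_additive _ _ hsseW
  have hrkT : h.rkC ((T : C) : C) = h.rkC ((W : C) : C) + h.rkC R := by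
    have e := h.rk_additive _ (h.F_exact _ _ hsseW); dsimp at e; exact e
  -- `W` as a subobject of `X`
  haveI : Mono (W.arrow ≫ T.arrow) := mono_comp _ _
  set mW : ((W : C) : C) ⟶ X := W.arrow ≫ T.arrow with hmW
  set wsub : Subobject X := Subobject.mk mW with hwsub
  have hdegw : h.deg ((wsub : C) : C) = h.deg ((W : C) : C) :=
    h.deg_iso (Subobject.underlyingIso mW)
  have hrkw : h.rkC ((wsub : C) : C) = h.rkC ((W : C) : C) :=
    h.rk_iso (F.mapIso (Subobject.underlyingIso mW))
  have hWbound : h.rkC ((S : C) : C) • h.deg ((W : C) : C)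
      ≤ h.rkC ((W : C) : C) • h.deg ((S : C) : C) := by
    by_cases hz : IsZero ((W : C) : C)
    · rw [h.deg_isZero hz, h.rkC_isZero hz, smul_zero, zero_smul]
    · have hnz : ¬ IsZero ((wsub : C) : C) :=
        fun hzz => hz (IsZero.of_iso hzz (Subobject.underlyingIso mW).symm)
      have e : h.rkC ((S : C) : C) • h.deg ((wsub : C) : C)
          ≤ h.rkC ((wsub : C) : C) • h.deg ((S : C) : C) := hS.2 wsub hnz
      rw [hdegw, hrkw] at e
      exact e
  have hST : h.rkC ((T : C) : C) • h.deg ((S : C) : C)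
      ≤ h.rkC ((S : C) : C) • h.deg ((T : C) : C) := hT.2 S hS.1
  have hsum : h.rkC ((U' : C) : C) + h.rkC ((W : C) : C)
      = h.rkC ((S : C) : C) + h.rkC ((T : C) : C) := by omega
  constructor
  · exact arith1 h hdegU hdegT hdegA hdegR hWbound hST hsum
  · -- the intersection part
    intro Ig hglb
    have hUS : h.rkC ((S : C) : C) • h.deg ((U' : C) : C)
        ≤ h.rkC ((U' : C) : C) • h.deg ((S : C) : C) :=
      hS.2 U' (h.not_isZero_of_le hS.1 hSU)
    have hwb : h.rkC ((W : C) : C) • h.deg ((S : C) : C)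
        ≤ h.rkC ((S : C) : C) • h.deg ((W : C) : C) :=
      arith2 h hdegU hdegT hdegA hdegR hST hUS hsum
    -- wsub ≤ T
    have hwT : wsub ≤ T := by
      conv_rhs => rw [← Subobject.mk_arrow T]
      exact Subobject.mk_le_mk_of_comm W.arrow rfl
    -- wsub ≤ S
    have hSstrict := h.strict_of_max hS
    haveI : Mono (F.map W.arrow) := h.mono_F_arrow W
    have harr : (Subobject.underlyingIso mW).hom ≫ mW = wsub.arrow :=
      (Iso.eq_inv_comp _).mp (Subobject.underlyingIso_arrow mW).symm
    have himw : imageSubobject (F.map wsub.arrow) = imageSubobject (F.map mW) := by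
      rw [← harr, F.map_comp]
      exact imageSubobject_iso_comp (F.map (Subobject.underlyingIso mW).hom) (F.map mW)
    obtain ⟨l, hl0⟩ := KernelFork.IsLimit.lift' (h.F_exact _ _ hsseA).fIsKernel
      (F.map (W.arrow ≫ tY)) (by
        show F.map (W.arrow ≫ tY) ≫ F.map q = 0
        rw [← F.map_comp, Category.assoc, ← hg', hWg0, F.map_zero])
    have hl : l ≫ F.map A.arrow = F.map (W.arrow ≫ tY) := hl0
    have e1 : inv (F.map φ₀) ≫ F.map sY = F.map A.arrow := by
      rw [IsIso.inv_comp_eq, ← F.map_comp, hφ₀]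
    have hfacW : F.map mW = (l ≫ inv (F.map φ₀)) ≫ F.map S.arrow := by
      rw [hmW]
      calc F.map (W.arrow ≫ T.arrow) = F.map ((W.arrow ≫ tY) ≫ U'.arrow) := by
            rw [Category.assoc, htYa]
        _ = F.map (W.arrow ≫ tY) ≫ F.map U'.arrow := F.map_comp _ _
        _ = (l ≫ F.map A.arrow) ≫ F.map U'.arrow := by rw [hl]
        _ = (l ≫ inv (F.map φ₀) ≫ F.map sY) ≫ F.map U'.arrow := by rw [e1]
        _ = (l ≫ inv (F.map φ₀)) ≫ F.map sY ≫ F.map U'.arrow := by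
            simp only [Category.assoc]
        _ = (l ≫ inv (F.map φ₀)) ≫ F.map S.arrow := by
            rw [show F.map sY ≫ F.map U'.arrow = F.map S.arrow from by
              rw [← F.map_comp, hsYa]]
    have hwS : wsub ≤ S := by
      apply h.le_of_image_le hSstrict
      rw [himw, hfacW]
      exact imageSubobject_comp_le _ _
    have hwI : wsub ≤ Ig := by
      apply hglb.2
      intro x hx
      simp only [Set.mem_insert_iff, Set.mem_singleton_iff] at hx
      rcases hx with rfl | rfl
      exacts [hwS, hwT]
    have hIT : Ig ≤ T := hglb.1 (by simp)
    have hIS : Ig ≤ S := hglb.1 (by simp)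
    -- image of Ig is contained in image of wsub
    have hIg0 : Subobject.ofLE Ig T hIT ≫ g' = 0 := by
      rw [hg', ← Category.assoc, Subobject.ofLE_comp_ofLE,
        ← Subobject.ofLE_comp_ofLE Ig S U' hIS hSU, Category.assoc, hsq0, comp_zero]
    haveI : Mono (F.map wsub.arrow) := h.mono_F_arrow wsub
    haveI : Mono (F.map Ig.arrow) := h.mono_F_arrow Ig
    haveI : Mono (factorThruImageSubobject (F.map W.arrow)) :=
      mono_of_mono_fac (imageSubobject_arrow_comp (F.map W.arrow))
    haveI : IsIso (factorThruImageSubobject (F.map W.arrow)) := isIso_of_mono_of_epi _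
    have hker : (kernelSubobject (F.map g')).arrow
        = Subobject.ofLE _ _ hWim.ge ≫ (imageSubobject (F.map W.arrow)).arrow :=
      (Subobject.ofLE_arrow hWim.ge).symm
    have himarr : (imageSubobject (F.map W.arrow)).arrow
        = inv (factorThruImageSubobject (F.map W.arrow)) ≫ F.map W.arrow := by
      rw [eq_comm, IsIso.inv_comp_eq, imageSubobject_arrow_comp]
    have hzz : F.map (Subobject.ofLE Ig T hIT) ≫ F.map g' = 0 := by
      rw [← F.map_comp, hIg0, F.map_zero]
    have hk : factorThruKernelSubobject (F.map g') (F.map (Subobject.ofLE Ig T hIT)) hzz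
        ≫ (kernelSubobject (F.map g')).arrow = F.map (Subobject.ofLE Ig T hIT) :=
      factorThruKernelSubobject_comp_arrow _ _ _
    have hIfac : F.map Ig.arrow
        = (factorThruKernelSubobject (F.map g') (F.map (Subobject.ofLE Ig T hIT)) hzz
            ≫ Subobject.ofLE _ _ hWim.ge ≫
            inv (factorThruImageSubobject (F.map W.arrow))) ≫ F.map mW := by
      calc F.map Ig.arrow = F.map (Subobject.ofLE Ig T hIT) ≫ F.map T.arrow := by
            rw [← F.map_comp, Subobject.ofLE_arrow]
        _ = (factorThruKernelSubobject (F.map g') (F.map (Subobject.ofLE Ig T hIT)) hzz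
              ≫ (kernelSubobject (F.map g')).arrow) ≫ F.map T.arrow := by rw [hk]
        _ = (factorThruKernelSubobject (F.map g') (F.map (Subobject.ofLE Ig T hIT)) hzz
              ≫ Subobject.ofLE _ _ hWim.ge ≫ (imageSubobject (F.map W.arrow)).arrow)
              ≫ F.map T.arrow := by rw [Subobject.ofLE_arrow]
        _ = (factorThruKernelSubobject (F.map g') (F.map (Subobject.ofLE Ig T hIT)) hzz
              ≫ Subobject.ofLE _ _ hWim.ge ≫ inv (factorThruImageSubobject (F.map W.arrow)))
              ≫ F.map W.arrow ≫ F.map T.arrow := by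
            rw [himarr]; simp only [Category.assoc]
        _ = _ := by rw [← F.map_comp, ← hmW]
    have him2 : imageSubobject (F.map wsub.arrow) = imageSubobject (F.map Ig.arrow) := by
      refine le_antisymm (h.image_le_of_le hwI) ?_
      rw [himw, hIfac]
      exact imageSubobject_comp_le _ _
    have hιIiso : IsIso (F.map (Subobject.ofLE wsub Ig hwI)) :=
      h.isIso_F_of_factor wsub.arrow Ig.arrow _ (Subobject.ofLE_arrow hwI) him2
    have hdegI : h.deg ((wsub : C) : C) ≤ h.deg ((Ig : C) : C) := h.deg_le_of_FIso _ hιIiso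
    have hrkI : h.rkC ((wsub : C) : C) = h.rkC ((Ig : C) : C) :=
      h.rk_iso (asIso (F.map (Subobject.ofLE wsub Ig hwI)))
    calc h.rkC ((Ig : C) : C) • h.deg ((S : C) : C)
        = h.rkC ((W : C) : C) • h.deg ((S : C) : C) := by rw [← hrkI, hrkw]
      _ ≤ h.rkC ((S : C) : C) • h.deg ((W : C) : C) := hwb
      _ = h.rkC ((S : C) : C) • h.deg ((wsub : C) : C) := by rw [hdegw]
      _ ≤ h.rkC ((S : C) : C) • h.deg ((Ig : C) : C) := nsmul_le_nsmul_right hdegI _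

lemma sup_epi {X : C} (S T : Subobject X) :
    ∃ Ut : Subobject X, h.StrictSub Ut ∧
      ∃ (h1 : S ≤ Ut) (h2 : T ≤ Ut),
        ∀ (W : Subobject X) (hSW : S ≤ W) (hTW : T ≤ W), W ≤ Ut →
          Epi (F.map (biprod.desc (Subobject.ofLE S W hSW) (Subobject.ofLE T W hTW))) := by
  obtain ⟨Ut, hUt, him⟩ := h.exists_strict X
    (imageSubobject (F.map (biprod.desc S.arrow T.arrow)))
  have hS1 : S ≤ Ut := by
    apply h.le_of_image_le hUt
    rw [him]
    have e : F.map S.arrow = F.map biprod.inl ≫ F.map (biprod.desc S.arrow T.arrow) := by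
      rw [← F.map_comp, biprod.inl_desc]
    rw [e]
    exact imageSubobject_comp_le _ _
  have hT1 : T ≤ Ut := by
    apply h.le_of_image_le hUt
    rw [him]
    have e : F.map T.arrow = F.map biprod.inr ≫ F.map (biprod.desc S.arrow T.arrow) := by
      rw [← F.map_comp, biprod.inr_desc]
    rw [e]
    exact imageSubobject_comp_le _ _
  refine ⟨Ut, hUt, hS1, hT1, ?_⟩
  intro W hSW hTW hWUt
  have hcomm : biprod.desc (Subobject.ofLE S Ut hS1) (Subobject.ofLE T Ut hT1) ≫ Ut.arrow
      = biprod.desc S.arrow T.arrow := by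
    apply biprod.hom_ext' <;> simp [Subobject.ofLE_arrow]
  haveI : Mono (F.map Ut.arrow) := h.mono_F_arrow Ut
  haveI hepiUt : Epi (F.map (biprod.desc (Subobject.ofLE S Ut hS1)
      (Subobject.ofLE T Ut hT1))) := by
    apply epi_of_image_eq' _ (F.map Ut.arrow)
    rw [← F.map_comp, hcomm]
    exact him.symm
  have hcomm2 : biprod.desc (Subobject.ofLE S W hSW) (Subobject.ofLE T W hTW)
      ≫ Subobject.ofLE W Ut hWUt
      = biprod.desc (Subobject.ofLE S Ut hS1) (Subobject.ofLE T Ut hT1) := by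
    apply biprod.hom_ext' <;> simp [Subobject.ofLE_comp_ofLE]
  haveI hmono : Mono (F.map (Subobject.ofLE W Ut hWUt)) := by
    haveI := h.mono_F_arrow W
    have e : F.map (Subobject.ofLE W Ut hWUt) ≫ F.map Ut.arrow = F.map W.arrow := by
      rw [← F.map_comp, Subobject.ofLE_arrow]
    exact mono_of_mono_fac e
  haveI hcompepi : Epi (F.map (biprod.desc (Subobject.ofLE S W hSW) (Subobject.ofLE T W hTW))
      ≫ F.map (Subobject.ofLE W Ut hWUt)) := by
    rw [← F.map_comp, hcomm2]
    exact hepiUt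
  haveI : Epi (F.map (Subobject.ofLE W Ut hWUt)) :=
    epi_of_epi (F.map (biprod.desc (Subobject.ofLE S W hSW) (Subobject.ofLE T W hTW))) _
  haveI : IsIso (F.map (Subobject.ofLE W Ut hWUt)) := isIso_of_mono_of_epi _
  have e2 : F.map (biprod.desc (Subobject.ofLE S W hSW) (Subobject.ofLE T W hTW))
      = (F.map (biprod.desc (Subobject.ofLE S W hSW) (Subobject.ofLE T W hTW))
        ≫ F.map (Subobject.ofLE W Ut hWUt)) ≫ inv (F.map (Subobject.ofLE W Ut hWUt)) := by
    simp
  rw [e2]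
  infer_instance

end HNTheory

/-- (5.2) If `S`, `T` are subobjects of `X` of maximal slope, then `S + T` is
of maximal slope, and `S ∩ T` is of maximal slope if nonzero; consequently,
if `X` admits a subobject of maximal slope, it admits a unique final one. -/
theorem stmt15 (h : HNTheory C D F V) {X : C} (S T U I : Subobject X)
    (hS : h.MaxSlopeSub S) (hT : h.MaxSlopeSub T)
    (hU : IsLUB {S, T} U) (hI : IsGLB {S, T} I) :
    h.MaxSlopeSub U ∧ (¬ IsZero ((I : C)) → h.MaxSlopeSub I) ∧
    ((∃ S' : Subobject X, h.MaxSlopeSub S') →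
      ∃! M : Subobject X, h.MaxSlopeSub M ∧
        ∀ S' : Subobject X, h.MaxSlopeSub S' → S' ≤ M) := by
  obtain ⟨Ut, hUtstrict, hSUt, hTUt, hepiAll⟩ := h.sup_epi S T
  have hSU : S ≤ U := hU.1 (by simp)
  have hTU : T ≤ U := hU.1 (by simp)
  have hUUt : U ≤ Ut := hU.2 (by
    rintro x hx
    simp only [Set.mem_insert_iff, Set.mem_singleton_iff] at hx
    rcases hx with rfl | rfl
    exacts [hSUt, hTUt])
  have hepiU := hepiAll U hSU hTU hUUt
  obtain ⟨hcore1, hcore2⟩ := h.core S T U hS hT hSU hTU hepiU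
  have hUnz : ¬ IsZero ((U : C) : C) := h.not_isZero_of_le hS.1 hSU
  refine ⟨h.max_transfer hS U hUnz hcore1,
    fun hInz => h.max_transfer hS I hInz (hcore2 I hI), ?_⟩
  rintro ⟨S0, hS0⟩
  set ns : Set ℕ := {n | ∃ M : Subobject X, h.MaxSlopeSub M ∧ h.rkC ((M : C) : C) = n}
    with hns
  have hne : ns.Nonempty := ⟨_, S0, hS0, rfl⟩
  have hbdd : BddAbove ns := by
    refine ⟨h.rk (F.obj X), ?_⟩
    rintro n ⟨M, hM, rfl⟩
    haveI := h.mono_F_arrow M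
    exact h.rk_le_of_mono (F.map M.arrow)
  obtain ⟨M, hM, hMr⟩ := Nat.sSup_mem hne hbdd
  have hMax : ∀ W : Subobject X, h.MaxSlopeSub W → h.rkC ((W : C) : C) ≤ h.rkC ((M : C) : C) := by
    intro W hW
    rw [hMr]
    exact le_csSup hbdd ⟨W, hW, rfl⟩
  have hfin : ∀ S' : Subobject X, h.MaxSlopeSub S' → S' ≤ M := by
    intro S' hS'
    obtain ⟨Ut', hUt'strict, hS'Ut, hMUt, hepiAll'⟩ := h.sup_epi S' M
    have hepi' := hepiAll' Ut' hS'Ut hMUt le_rfl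
    obtain ⟨hc1, -⟩ := h.core S' M Ut' hS' hM hS'Ut hMUt hepi'
    have hUt'nz : ¬ IsZero ((Ut' : C) : C) := h.not_isZero_of_le hS'.1 hS'Ut
    have hUt'max : h.MaxSlopeSub Ut' := h.max_transfer hS' Ut' hUt'nz hc1
    haveI hmono : Mono (F.map (Subobject.ofLE M Ut' hMUt)) := by
      haveI := h.mono_F_arrow M
      have e : F.map (Subobject.ofLE M Ut' hMUt) ≫ F.map Ut'.arrow = F.map M.arrow := by
        rw [← F.map_comp, Subobject.ofLE_arrow]
      exact mono_of_mono_fac e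
    have hrkle : h.rkC ((M : C) : C) ≤ h.rkC ((Ut' : C) : C) :=
      h.rk_le_of_mono (F.map (Subobject.ofLE M Ut' hMUt))
    have hrkeq : h.rkC ((M : C) : C) = h.rkC ((Ut' : C) : C) :=
      le_antisymm hrkle (hMax Ut' hUt'max)
    have hiso : IsIso (F.map (Subobject.ofLE M Ut' hMUt)) := h.isIso_of_mono_of_rk_eq _ hrkeq
    have hdegle : h.deg ((M : C) : C) ≤ h.deg ((Ut' : C) : C) := h.deg_le_of_FIso _ hiso
    have hmu : h.rkC ((M : C) : C) • h.deg ((Ut' : C) : C)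
        ≤ h.rkC ((Ut' : C) : C) • h.deg ((M : C) : C) := hM.2 Ut' hUt'nz
    have hdegge : h.deg ((Ut' : C) : C) ≤ h.deg ((M : C) : C) := by
      apply HNTheory.nsmul_cancel (h.rkC_pos hM.1)
      calc h.rkC ((M : C) : C) • h.deg ((Ut' : C) : C)
          ≤ h.rkC ((Ut' : C) : C) • h.deg ((M : C) : C) := hmu
        _ = h.rkC ((M : C) : C) • h.deg ((M : C) : C) := by rw [← hrkeq]
    haveI : IsIso (Subobject.ofLE M Ut' hMUt) :=
      (h.deg_eq_iff_of_FIso _ hiso).1 (le_antisymm hdegle hdegge)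
    have hUtM : Ut' ≤ M := Subobject.le_of_comm (inv (Subobject.ofLE M Ut' hMUt))
      (by rw [IsIso.inv_comp_eq]; exact (Subobject.ofLE_arrow hMUt).symm)
    exact hS'Ut.trans hUtM
  exact ⟨M, ⟨hM, hfin⟩, fun M₂ hM₂ => le_antisymm (hfin M₂ hM₂.1) (hM₂.2 M hM)⟩
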